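/- Let 0 < q < 1, r ≥ 2, 1 ≤ m ≤ r, and z ∈ ℂ. Then ∏_{n=N+1}^{∞} (1-q^n)^{C(N-n, r-m) C(z,m)} → 1 as N → ∞; more precisely, |log ∏_{n=N+1}^{∞} (1-q^n)^{C(N-n,r-m)C(z,m)}| ≤ q^N · |C(z,m)|/((r-m)!(1-q)) · ∑_{n=1}^{∞} (n+r-m-1)(n+r-m-2)⋯(n+1)·n · q^n, which tends to 0. -/

import Mathlib

open Finset Filter Topology

/-- Generalized binomial coefficient C(z,k) = z(z-1)⋯(z-k+1)/k!. -/
noncomputable def genBinom (z : ℂ) (k : ℕ) : ℂ :=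
  (∏ i ∈ Finset.range k, (z - i)) / (Nat.factorial k)

/-- g_r(z,n) = ∑_{m=1}^{r-1} (-1)^{m-1} C(z, r-m) C(n+m-2, m-1), with g_1 = 0. -/
noncomputable def qg (r : ℕ) (z : ℂ) (n : ℕ) : ℂ :=
  ∑ m ∈ Finset.Icc 1 (r - 1),
    (-1 : ℂ) ^ (m - 1) * genBinom z (r - m) * (Nat.choose (n + m - 2) (m - 1))

lemma prodCastFact (k : ℕ) : ∏ i ∈ Finset.range k, ((i:ℝ)+1) = (Nat.factorial k : ℝ) := by
  induction k with
  | zero => simp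
  | succ t ih => rw [Finset.prod_range_succ, ih, Nat.factorial_succ]; push_cast; ring

theorem stmt15 (q : ℝ) (hq : 0 < q) (hq1 : q < 1) (r m : ℕ) (hr : 2 ≤ r)
    (hm1 : 1 ≤ m) (hmr : m ≤ r) (z : ℂ) :
    (∀ N : ℕ,
        ‖∑' j : ℕ, (genBinom ((N : ℂ) - ((N : ℂ) + 1 + j)) (r - m) * genBinom z m) *
            Complex.log (1 - (q : ℂ) ^ (N + 1 + j))‖
          ≤ q ^ N * (‖genBinom z m‖ / ((Nat.factorial (r - m)) * (1 - q)) *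
              ∑' n : ℕ, (∏ i ∈ Finset.range (r - m), ((n : ℝ) + 1 + i)) * q ^ (n + 1)))
    ∧ Tendsto (fun N : ℕ => ∏' j : ℕ,
          (1 - (q : ℂ) ^ (N + 1 + j)) ^
            (genBinom ((N : ℂ) - ((N : ℂ) + 1 + j)) (r - m) * genBinom z m))
        atTop (𝓝 1) := by
  set k := r - m with hk
  have hq0 : (0:ℝ) ≤ q := hq.le
  have h1q : (0:ℝ) < 1 - q := by linarith
  -- basic positivity facts
  have hqn_lt : ∀ n : ℕ, 1 ≤ n → q ^ n ≤ q := by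
    intro n hn
    calc q ^ n ≤ q ^ 1 := pow_le_pow_of_le_one hq0 hq1.le hn
    _ = q := pow_one q
  have hqn1 : ∀ n : ℕ, 1 ≤ n → (0:ℝ) < 1 - q ^ n := by
    intro n hn
    have := hqn_lt n hn
    linarith
  -- the real coefficient f j
  set f : ℕ → ℝ := fun j => ∏ i ∈ Finset.range k, ((j : ℝ) + 1 + i) with hf
  have hf_nonneg : ∀ j, 0 ≤ f j := by
    intro j
    apply Finset.prod_nonneg
    intro i _
    positivity
  -- norm of genBinom at negative integers
  have hgb : ∀ N j : ℕ, ‖genBinom ((N : ℂ) - ((N : ℂ) + 1 + j)) k‖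
      = f j / (Nat.factorial k) := by
    intro N j
    rw [genBinom, norm_div]
    congr 1
    · rw [norm_prod]
      apply Finset.prod_congr rfl
      intro i _
      have : ((N : ℂ) - ((N : ℂ) + 1 + j) - i) = -((((j:ℝ) + 1 + i : ℝ)) : ℂ) := by
        push_cast; ring
      rw [this, norm_neg, Complex.norm_real, Real.norm_of_nonneg (by positivity)]
    · simp [Complex.norm_natCast]
  -- complex base equals real cast
  have hbase : ∀ n : ℕ, (1 - (q : ℂ) ^ n) = (((1 - q ^ n : ℝ)) : ℂ) := by
    intro n; push_cast; ring
  -- log bound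
  have hlog : ∀ n : ℕ, 1 ≤ n → ‖Complex.log (1 - (q : ℂ) ^ n)‖ ≤ q ^ n / (1 - q) := by
    intro n hn
    have h1 : (0:ℝ) < 1 - q ^ n := hqn1 n hn
    rw [hbase n, ← Complex.ofReal_log h1.le, Complex.norm_real]
    have hle : Real.log (1 - q ^ n) ≤ 0 :=
      Real.log_nonpos (by positivity) (by nlinarith [pow_pos hq n])
    rw [Real.norm_eq_abs, abs_of_nonpos hle]
    have h2 := Real.log_le_sub_one_of_pos (inv_pos.mpr h1)
    rw [Real.log_inv] at h2
    have h3 : (1 - q ^ n)⁻¹ - 1 = q ^ n / (1 - q ^ n) := by field_simp; ring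
    have h4 : -Real.log (1 - q ^ n) ≤ q ^ n / (1 - q ^ n) := by linarith
    have h5 : q ^ n / (1 - q ^ n) ≤ q ^ n / (1 - q) :=
      div_le_div_of_nonneg_left (pow_nonneg hq0 n) h1q (by have := hqn_lt n hn; linarith)
    linarith
  -- summability of the comparison series
  have hF_summable : Summable (fun n : ℕ => f n * q ^ (n + 1)) := by
    have hg : Summable (fun n : ℕ => (n : ℝ) ^ k * q ^ n) := by
      have : ‖q‖ < 1 := by rwa [Real.norm_eq_abs, abs_of_nonneg hq0]
      exact summable_pow_mul_geometric_of_norm_lt_one k this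
    have hg1 : Summable (fun n : ℕ => ((n + 1 : ℕ) : ℝ) ^ k * q ^ (n + 1)) :=
      (summable_nat_add_iff (f := fun n : ℕ => (n : ℝ) ^ k * q ^ n) 1).mpr hg
    have hg2 : Summable (fun n : ℕ =>
        (Nat.factorial k : ℝ) * (((n + 1 : ℕ) : ℝ) ^ k * q ^ (n + 1))) := hg1.mul_left _
    refine Summable.of_nonneg_of_le (fun n => mul_nonneg (hf_nonneg n) (by positivity)) (fun n => ?_) hg2
    have hfb : f n ≤ ((n:ℝ) + 1) ^ k * (Nat.factorial k : ℝ) := by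
      have : f n ≤ ∏ i ∈ Finset.range k, (((n:ℝ) + 1) * ((i:ℝ) + 1)) := by
        apply Finset.prod_le_prod
        · intro i _; positivity
        · intro i _; nlinarith [Nat.cast_nonneg (α := ℝ) n, Nat.cast_nonneg (α := ℝ) i]
      rw [Finset.prod_mul_distrib, Finset.prod_const, Finset.card_range] at this
      calc f n ≤ ((n:ℝ)+1)^k * ∏ i ∈ Finset.range k, ((i:ℝ)+1) := this
      _ = ((n:ℝ)+1)^k * (Nat.factorial k : ℝ) := by rw [prodCastFact]
    calc f n * q ^ (n+1) ≤ (((n:ℝ)+1)^k * (Nat.factorial k : ℝ)) * q ^ (n+1) := by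
          apply mul_le_mul_of_nonneg_right hfb (by positivity)
    _ = (Nat.factorial k : ℝ) * (((n + 1 : ℕ) : ℝ) ^ k * q ^ (n+1)) := by push_cast; ring
  -- the constant
  set c : ℝ := ‖genBinom z m‖ / ((Nat.factorial k) * (1 - q)) with hc
  have hc0 : 0 ≤ c := by
    apply div_nonneg (norm_nonneg _)
    positivity
  -- termwise norm bound
  have hbound : ∀ N j : ℕ,
      ‖(genBinom ((N : ℂ) - ((N : ℂ) + 1 + j)) k * genBinom z m) *
          Complex.log (1 - (q : ℂ) ^ (N + 1 + j))‖
        ≤ (c * q ^ N) * (f j * q ^ (j + 1)) := by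
    intro N j
    rw [norm_mul, norm_mul, hgb N j]
    have hlogb := hlog (N + 1 + j) (by omega)
    have hfact : (0:ℝ) < (Nat.factorial k : ℝ) := by positivity
    calc f j / (Nat.factorial k) * ‖genBinom z m‖ * ‖Complex.log (1 - (q:ℂ) ^ (N+1+j))‖
        ≤ f j / (Nat.factorial k) * ‖genBinom z m‖ * (q ^ (N+1+j) / (1 - q)) := by
          apply mul_le_mul_of_nonneg_left hlogb
          positivity
    _ = (c * q ^ N) * (f j * q ^ (j + 1)) := by
          rw [hc]
          field_simp
          ring
  -- summability of norms
  have hsum_norm : ∀ N : ℕ, Summable (fun j : ℕ =>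
      ‖(genBinom ((N : ℂ) - ((N : ℂ) + 1 + j)) k * genBinom z m) *
          Complex.log (1 - (q : ℂ) ^ (N + 1 + j))‖) := by
    intro N
    apply Summable.of_nonneg_of_le (fun j => norm_nonneg _) (hbound N)
    exact (hF_summable.mul_left (c * q ^ N))
  have hsum : ∀ N : ℕ, Summable (fun j : ℕ =>
      (genBinom ((N : ℂ) - ((N : ℂ) + 1 + j)) k * genBinom z m) *
          Complex.log (1 - (q : ℂ) ^ (N + 1 + j))) := by
    intro N
    exact Summable.of_norm (hsum_norm N)
  -- part 1
  have part1 : ∀ N : ℕ,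
      ‖∑' j : ℕ, (genBinom ((N : ℂ) - ((N : ℂ) + 1 + j)) k * genBinom z m) *
          Complex.log (1 - (q : ℂ) ^ (N + 1 + j))‖
        ≤ q ^ N * (c * ∑' n : ℕ, f n * q ^ (n + 1)) := by
    intro N
    calc ‖∑' j : ℕ, (genBinom ((N : ℂ) - ((N : ℂ) + 1 + j)) k * genBinom z m) *
          Complex.log (1 - (q : ℂ) ^ (N + 1 + j))‖
        ≤ ∑' j : ℕ, ‖(genBinom ((N : ℂ) - ((N : ℂ) + 1 + j)) k * genBinom z m) *
          Complex.log (1 - (q : ℂ) ^ (N + 1 + j))‖ := norm_tsum_le_tsum_norm (hsum_norm N)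
    _ ≤ ∑' j : ℕ, (c * q ^ N) * (f j * q ^ (j + 1)) :=
        Summable.tsum_le_tsum (hbound N) (hsum_norm N) (hF_summable.mul_left _)
    _ = (c * q ^ N) * ∑' n : ℕ, f n * q ^ (n + 1) := tsum_mul_left
    _ = q ^ N * (c * ∑' n : ℕ, f n * q ^ (n + 1)) := by ring
  constructor
  · exact part1
  -- part 2
  · have hne : ∀ n : ℕ, 1 ≤ n → (1 - (q : ℂ) ^ n) ≠ 0 := by
      intro n hn
      rw [hbase n]
      exact_mod_cast (hqn1 n hn).ne'
    have hprod : ∀ N : ℕ, (∏' j : ℕ,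
        (1 - (q : ℂ) ^ (N + 1 + j)) ^
          (genBinom ((N : ℂ) - ((N : ℂ) + 1 + j)) k * genBinom z m))
        = Complex.exp (∑' j : ℕ,
            (genBinom ((N : ℂ) - ((N : ℂ) + 1 + j)) k * genBinom z m) *
              Complex.log (1 - (q : ℂ) ^ (N + 1 + j))) := by
      intro N
      have hHS := (hsum N).hasSum
      have hHP := hHS.cexp
      have heq : (Complex.exp ∘ fun j : ℕ =>
          (genBinom ((N : ℂ) - ((N : ℂ) + 1 + j)) k * genBinom z m) *
            Complex.log (1 - (q : ℂ) ^ (N + 1 + j)))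
          = fun j : ℕ => (1 - (q : ℂ) ^ (N + 1 + j)) ^
              (genBinom ((N : ℂ) - ((N : ℂ) + 1 + j)) k * genBinom z m) := by
        funext j
        rw [Function.comp_apply, Complex.cpow_def_of_ne_zero (hne (N+1+j) (by omega)),
          mul_comm]
      rw [heq] at hHP
      exact hHP.tprod_eq
    have hS0 : Tendsto (fun N : ℕ => ∑' j : ℕ,
        (genBinom ((N : ℂ) - ((N : ℂ) + 1 + j)) k * genBinom z m) *
          Complex.log (1 - (q : ℂ) ^ (N + 1 + j))) atTop (𝓝 0) := by
      apply squeeze_zero_norm part1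
      have : Tendsto (fun N : ℕ => q ^ N) atTop (𝓝 0) :=
        tendsto_pow_atTop_nhds_zero_of_lt_one hq0 hq1
      simpa using this.mul_const (c * ∑' n : ℕ, f n * q ^ (n + 1))
    have := (Complex.continuous_exp.tendsto 0).comp hS0
    rw [Complex.exp_zero] at this
    convert this using 2 with N
    exact hprod N
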